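/- For n > m ≥ 0 natural numbers, the coefficient c_n in the power-series expansion of (1-z)^m log(1-z) about z = 0 satisfies c_n = -(1/n) · (-1)^m · m! (n-m-1)! / (n-1)!. -/

import Mathlib

open Polynomial in
lemma poly_iter_zero (m k : ℕ) (hk : m < k) (x : ℝ) :
    iteratedDeriv k (fun y : ℝ => (1 - y) ^ m) x = 0 := by
  have key : ∀ j, iteratedDeriv j (fun y : ℝ => ((1 - X : ℝ[X]) ^ m).eval y)
      = fun y => ((Polynomial.derivative^[j]) ((1 - X : ℝ[X]) ^ m)).eval y := by
    intro j
    induction j with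
    | zero => simp
    | succ j ih =>
      rw [iteratedDeriv_succ, ih]
      funext y
      rw [Function.iterate_succ_apply']
      exact Polynomial.deriv (p := Polynomial.derivative^[j] ((1 - X : ℝ[X]) ^ m))
  have hfun : (fun y : ℝ => (1 - y) ^ m) = fun y : ℝ => ((1 - X : ℝ[X]) ^ m).eval y := by
    funext y; simp
  have hdeg : ((1 - X : ℝ[X]) ^ m).natDegree < k := by
    have h1 : ((1 - X : ℝ[X])).natDegree ≤ 1 := by
      refine le_trans (natDegree_sub_le _ _) ?_
      simp
    calc ((1 - X : ℝ[X]) ^ m).natDegree ≤ m * ((1 - X : ℝ[X])).natDegree :=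
          natDegree_pow_le
      _ ≤ m * 1 := Nat.mul_le_mul_left _ h1
      _ < k := by omega
  rw [hfun, key k, Polynomial.iterate_derivative_eq_zero hdeg]
  simp

lemma iteratedDerivWithin_of_isOpen' {s : Set ℝ} {x : ℝ} (n : ℕ) (hs : IsOpen s)
    (hx : x ∈ s) (f : ℝ → ℝ) : iteratedDerivWithin n f s x = iteratedDeriv n f x := by
  rw [iteratedDerivWithin_eq_iteratedFDerivWithin, iteratedDeriv_eq_iteratedFDeriv,
    iteratedFDerivWithin_of_isOpen n hs hx]

lemma hasDerivAt_one_sub (x : ℝ) : HasDerivAt (fun y : ℝ => 1 - y) (-1) x := by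
  simpa using (hasDerivAt_id x).const_sub 1

lemma log_deriv_lemma (n : ℕ) (x : ℝ) (hx : x ≠ 1) :
    iteratedDerivWithin (n + 1) (fun y : ℝ => Real.log (1 - y)) {z : ℝ | z ≠ 1} x
      = -(n.factorial : ℝ) / (1 - x) ^ (n + 1) := by
  have hs : IsOpen {z : ℝ | z ≠ 1} := isOpen_compl_singleton
  have hu : UniqueDiffOn ℝ {z : ℝ | z ≠ 1} := hs.uniqueDiffOn
  induction n generalizing x with
  | zero =>
    rw [iteratedDerivWithin_one, derivWithin_of_isOpen hs hx]
    have h1 : (1 : ℝ) - x ≠ 0 := sub_ne_zero_of_ne (Ne.symm hx)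
    have hd : HasDerivAt (fun y : ℝ => Real.log (1 - y)) ((1 - x)⁻¹ * -1) x :=
      (Real.hasDerivAt_log h1).comp x (hasDerivAt_one_sub x)
    rw [hd.deriv]
    field_simp
    simp
  | succ n ih =>
    have h1 : (1 : ℝ) - x ≠ 0 := sub_ne_zero_of_ne (Ne.symm hx)
    rw [iteratedDerivWithin_succ, derivWithin_of_isOpen hs hx]
    have hev : (iteratedDerivWithin (n + 1) (fun y : ℝ => Real.log (1 - y)) {z : ℝ | z ≠ 1})
        =ᶠ[nhds x] fun y => -(n.factorial : ℝ) / (1 - y) ^ (n + 1) := by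
      filter_upwards [hs.mem_nhds hx] with y hy
      exact ih y hy
    rw [hev.deriv_eq]
    have hp : HasDerivAt (fun y : ℝ => (1 - y) ^ (n + 1))
        (((n : ℝ) + 1) * (1 - x) ^ n * -1) x := by
      simpa using (hasDerivAt_one_sub x).fun_pow (n + 1)
    have hinv := hp.fun_inv (pow_ne_zero _ h1)
    have hd := hinv.const_mul (-(n.factorial : ℝ))
    have hfun : (fun y : ℝ => -(n.factorial : ℝ) * ((1 - y) ^ (n + 1))⁻¹)
        = fun y : ℝ => -(n.factorial : ℝ) / (1 - y) ^ (n + 1) := by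
      funext y; rw [div_eq_mul_inv]
    rw [hfun] at hd
    rw [hd.deriv]
    rw [Nat.factorial_succ]
    push_cast
    field_simp
    ring

lemma contDiffOn_fm (m : ℕ) :
    ContDiffOn ℝ ⊤ (fun y : ℝ => (1 - y) ^ m * Real.log (1 - y)) {z : ℝ | z ≠ 1} := by
  have hbase : ContDiffOn ℝ ⊤ (fun y : ℝ => 1 - y) {z : ℝ | z ≠ 1} :=
    (contDiff_const.sub contDiff_id).contDiffOn
  have hne : ∀ y ∈ {z : ℝ | z ≠ 1}, (1 : ℝ) - y ≠ 0 := fun y hy =>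
    sub_ne_zero_of_ne (Ne.symm hy)
  exact (hbase.pow m).mul (hbase.log hne)

lemma main_lemma (m : ℕ) : ∀ n : ℕ, m < n → ∀ x : ℝ, x ≠ 1 →
    iteratedDerivWithin n (fun y : ℝ => (1 - y) ^ m * Real.log (1 - y)) {z : ℝ | z ≠ 1} x
      = -((-1 : ℝ) ^ m * (m.factorial : ℝ) * ((n - m - 1).factorial : ℝ) / (1 - x) ^ (n - m)) := by
  have hs : IsOpen {z : ℝ | z ≠ 1} := isOpen_compl_singleton
  have hu : UniqueDiffOn ℝ {z : ℝ | z ≠ 1} := hs.uniqueDiffOn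
  induction m with
  | zero =>
    intro n hn x hx
    obtain ⟨k, rfl⟩ := Nat.exists_eq_succ_of_ne_zero hn.ne'
    have hfun : (fun y : ℝ => (1 - y) ^ 0 * Real.log (1 - y))
        = fun y : ℝ => Real.log (1 - y) := by funext y; simp
    rw [hfun, log_deriv_lemma k x hx]
    norm_num [neg_div]
  | succ m ih =>
    intro n hn x hx
    have hx' : x ∈ {z : ℝ | z ≠ 1} := hx
    obtain ⟨k, rfl⟩ := Nat.exists_eq_add_of_lt hn
    have hkm : m < m + 1 + k := by omega
    rw [show m + 1 + k + 1 = (m + 1 + k) + 1 from rfl]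
    rw [iteratedDerivWithin_succ']
    set c : ℝ := -((m : ℝ) + 1) with hc
    have heq : Set.EqOn
        (derivWithin (fun y : ℝ => (1 - y) ^ (m + 1) * Real.log (1 - y)) {z : ℝ | z ≠ 1})
        ((fun y : ℝ => c * ((1 - y) ^ m * Real.log (1 - y))) - fun y : ℝ => (1 - y) ^ m)
        {z : ℝ | z ≠ 1} := by
      intro y hy
      have h1 : (1 : ℝ) - y ≠ 0 := sub_ne_zero_of_ne (Ne.symm hy)
      rw [derivWithin_of_isOpen hs hy]
      have hlog : HasDerivAt (fun z : ℝ => Real.log (1 - z)) ((1 - y)⁻¹ * -1) y :=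
        (Real.hasDerivAt_log h1).comp y (hasDerivAt_one_sub y)
      have hpow : HasDerivAt (fun z : ℝ => (1 - z) ^ (m + 1))
          (((m : ℝ) + 1) * (1 - y) ^ m * -1) y := by
        simpa using (hasDerivAt_one_sub y).fun_pow (m + 1)
      rw [(hpow.fun_mul hlog).deriv]
      simp only [Pi.sub_apply, hc]
      rw [pow_succ]
      field_simp
      ring
    rw [iteratedDerivWithin_congr heq hx]
    have hf1 : ContDiffOn ℝ ((m + 1 + k : ℕ) : ℕ∞)
        (fun y : ℝ => (1 - y) ^ m * Real.log (1 - y)) {z : ℝ | z ≠ 1} :=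
      (contDiffOn_fm m).of_le le_top
    have hf2 : ContDiffOn ℝ ((m + 1 + k : ℕ) : ℕ∞)
        (fun y : ℝ => (1 - y) ^ m) {z : ℝ | z ≠ 1} :=
      (((contDiff_const.sub contDiff_id).contDiffOn).pow m).of_le le_top
    rw [iteratedDerivWithin_sub hx' hu ((contDiffOn_const.mul hf1).contDiffWithinAt hx') (hf2.contDiffWithinAt hx')]
    have hcm : iteratedDerivWithin (m + 1 + k)
        (fun y : ℝ => c * ((1 - y) ^ m * Real.log (1 - y))) {z : ℝ | z ≠ 1} x
        = c * iteratedDerivWithin (m + 1 + k)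
            (fun y : ℝ => (1 - y) ^ m * Real.log (1 - y)) {z : ℝ | z ≠ 1} x :=
      iteratedDerivWithin_const_mul hx' hu c (hf1.contDiffWithinAt hx')
    rw [hcm, ih (m + 1 + k) hkm x hx,
      iteratedDerivWithin_of_isOpen' _ hs hx, poly_iter_zero m _ (by omega) x]
    have e1 : m + 1 + k - m = k + 1 := by omega
    have e2 : m + 1 + k + 1 - (m + 1) = k + 1 := by omega
    have e3 : k + 1 - 1 = k := rfl
    rw [e1, e2, e3, Nat.factorial_succ, hc]
    push_cast
    field_simp
    ring

theorem taylor_coeff_log_binomial (m n : ℕ) (h : m < n) :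
    iteratedDeriv n (fun x : ℝ => (1 - x) ^ m * Real.log (1 - x)) 0 / n.factorial =
      -(1 / n) * (-1) ^ m *
        ((m.factorial : ℝ) * ((n - m - 1).factorial : ℝ) / ((n - 1).factorial : ℝ)) := by
  have hx : (0 : ℝ) ∈ {z : ℝ | z ≠ 1} := by norm_num
  rw [← iteratedDerivWithin_of_isOpen' n (show IsOpen {z : ℝ | z ≠ 1} from isOpen_compl_singleton) hx,
    main_lemma m n h 0 (by norm_num)]
  have hfac : (n.factorial : ℝ) = n * ((n - 1).factorial : ℝ) := by
    rw [← Nat.mul_factorial_pred (by omega : n ≠ 0)]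
    push_cast
    ring
  have hn0 : (n : ℝ) ≠ 0 := Nat.cast_ne_zero.mpr (by omega)
  have hf0 : (((n - 1).factorial : ℕ) : ℝ) ≠ 0 := Nat.cast_ne_zero.mpr (Nat.factorial_ne_zero _)
  rw [hfac]
  norm_num
  field_simp
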